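/- Let (Ω, μ) be a measure space and let y : Ω → ℝ be μ-integrable. Let u and u_n (n ∈ ℕ) be square-integrable functions on ℝ (with respect to Lebesgue measure) such that u_n converges weakly to u in L²(ℝ), i.e., ∫_ℝ u_n w ds → ∫_ℝ u w ds for every square-integrable w : ℝ → ℝ. Then ∫_Ω ( g_{u_n}(y(x)) − g_u(y(x)) )² dμ(x) → 0 as n → ∞. -/

import Mathlib

open Set Filter Topology MeasureTheory intervalIntegral

private lemma aux_intervalIntegrable {v : ℝ → ℝ} (hv : MemLp v 2 (volume : Measure ℝ))
    (a b : ℝ) : IntervalIntegrable v volume a b := by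
  rw [intervalIntegrable_iff]
  haveI : IsFiniteMeasure ((volume : Measure ℝ).restrict (Set.uIoc a b)) := by
    constructor
    rw [Measure.restrict_apply_univ, Set.uIoc, Real.volume_Ioc]
    exact ENNReal.ofReal_lt_top
  exact (hv.restrict _).integrable one_le_two

/-- Cauchy–Schwarz estimate on an interval. -/
private lemma aux_setIntegral_le {v : ℝ → ℝ} (hv : MemLp v 2 (volume : Measure ℝ))
    {a b : ℝ} (hab : a ≤ b) :
    |∫ x in Set.Ioc a b, v x| ≤ (eLpNorm v 2 volume).toReal * Real.sqrt (b - a) := by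
  have hμs : (volume : Measure ℝ) (Set.Ioc a b) ≠ ⊤ := by
    rw [Real.volume_Ioc]; exact ENNReal.ofReal_ne_top
  set f : Lp ℝ 2 (volume : Measure ℝ) := hv.toLp v with hf
  set g : Lp ℝ 2 (volume : Measure ℝ) :=
    indicatorConstLp 2 measurableSet_Ioc hμs (1 : ℝ) with hg
  have h1 : (inner ℝ g f : ℝ) = ∫ x in Set.Ioc a b, v x := by
    rw [hg, MeasureTheory.L2.inner_indicatorConstLp_eq_setIntegral_inner]
    have : ∀ x, (inner ℝ (1 : ℝ) (f x) : ℝ) = f x := fun x => by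
      simp [RCLike.inner_apply]
    simp_rw [this]
    exact setIntegral_congr_ae measurableSet_Ioc
      ((hv.coeFn_toLp).mono fun x hx _ => hx)
  have h2 : |(inner ℝ g f : ℝ)| ≤ ‖g‖ * ‖f‖ := abs_real_inner_le_norm g f
  rw [h1] at h2
  refine h2.trans ?_
  have hgnorm : ‖g‖ ≤ Real.sqrt (b - a) := by
    rw [hg, norm_indicatorConstLp two_ne_zero ENNReal.ofNat_ne_top]
    simp only [norm_one, one_mul, Real.volume_Ioc]
    rw [Real.volume_real_Ioc_of_le hab, Real.sqrt_eq_rpow]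
    norm_num
  have hfnorm : ‖f‖ = (eLpNorm v 2 volume).toReal := Lp.norm_toLp v hv
  calc ‖g‖ * ‖f‖ ≤ Real.sqrt (b - a) * ‖f‖ := by
        exact mul_le_mul_of_nonneg_right hgnorm (norm_nonneg f)
    _ = (eLpNorm v 2 volume).toReal * Real.sqrt (b - a) := by rw [hfnorm, mul_comm]

private lemma aux_primitive_le {v : ℝ → ℝ} (hv : MemLp v 2 (volume : Measure ℝ)) (t : ℝ) :
    |∫ s in (0:ℝ)..t, v s| ≤ (eLpNorm v 2 volume).toReal * Real.sqrt |t| := by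
  rcases le_or_gt 0 t with ht | ht
  · rw [intervalIntegral.integral_of_le ht, abs_of_nonneg ht]
    simpa using aux_setIntegral_le hv ht
  · rw [intervalIntegral.integral_symm, abs_neg,
      intervalIntegral.integral_of_le ht.le, abs_of_neg ht]
    simpa using aux_setIntegral_le hv ht.le

/-- Pointwise (in `t`) convergence of the primitives. -/
private lemma aux_ptwise {u : ℝ → ℝ} {uN : ℕ → ℝ → ℝ}
    (hweak : ∀ w : ℝ → ℝ, MemLp w 2 (volume : Measure ℝ) →
      Tendsto (fun n => ∫ s, uN n s * w s) atTop (𝓝 (∫ s, u s * w s))) (t : ℝ) :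
    Tendsto (fun n => ∫ s in (0:ℝ)..t, uN n s) atTop (𝓝 (∫ s in (0:ℝ)..t, u s)) := by
  have key : ∀ a b : ℝ, a ≤ b →
      Tendsto (fun n => ∫ s in Set.Ioc a b, uN n s) atTop (𝓝 (∫ s in Set.Ioc a b, u s)) := by
    intro a b hab
    have hμs : (volume : Measure ℝ) (Set.Ioc a b) ≠ ⊤ := by
      rw [Real.volume_Ioc]; exact ENNReal.ofReal_ne_top
    set w : ℝ → ℝ := (Set.Ioc a b).indicator (fun _ => (1:ℝ)) with hw
    have hwmem : MemLp w 2 (volume : Measure ℝ) :=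
      memLp_indicator_const 2 measurableSet_Ioc (1:ℝ) (Or.inr hμs)
    have heq : ∀ v : ℝ → ℝ, (∫ s, v s * w s) = ∫ s in Set.Ioc a b, v s := by
      intro v
      rw [← MeasureTheory.integral_indicator measurableSet_Ioc]
      congr 1
      funext s
      by_cases hs : s ∈ Set.Ioc a b <;> simp [hw, Set.indicator_apply, hs]
    have := hweak w hwmem
    rw [heq u] at this
    simpa only [heq] using this
  rcases le_or_gt 0 t with ht | ht
  · simp_rw [intervalIntegral.integral_of_le ht]
    exact key 0 t ht
  · simp_rw [intervalIntegral.integral_symm t 0,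
      intervalIntegral.integral_of_le ht.le]
    exact (key t 0 ht.le).neg

/-- If `u_n ⇀ u` weakly in `L²(ℝ)` and `y` is `μ`-integrable, then
`∫_Ω (g_{u_n}(y(x)) − g_u(y(x)))² dμ → 0`, where `g_v(t) = ∫₀ᵗ v`. -/
theorem weak_convergence_implies_convergence_of_compositions {Ω : Type*}
    [MeasurableSpace Ω] (μ : Measure Ω) (y : Ω → ℝ) (hy : Integrable y μ)
    (u : ℝ → ℝ) (uN : ℕ → ℝ → ℝ)
    (hu : MemLp u 2 (volume : Measure ℝ))
    (huN : ∀ n, MemLp (uN n) 2 (volume : Measure ℝ))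
    (hweak : ∀ w : ℝ → ℝ, MemLp w 2 (volume : Measure ℝ) →
      Tendsto (fun n => ∫ s, uN n s * w s) atTop (𝓝 (∫ s, u s * w s))) :
    Tendsto
      (fun n => ∫ x, ((∫ s in (0:ℝ)..(y x), uN n s) - ∫ s in (0:ℝ)..(y x), u s) ^ 2 ∂μ)
      atTop (𝓝 0) := by
  -- Uniform bound on the norms via Banach–Steinhaus
  obtain ⟨C, hC⟩ : ∃ C : ℝ, ∀ n, ‖(huN n).toLp (uN n)‖ ≤ C := by
    set g : ℕ → (Lp ℝ 2 (volume : Measure ℝ)) →L[ℝ] ℝ :=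
      fun n => innerSL ℝ ((huN n).toLp (uN n)) with hgdef
    have hbdd : ∀ f : Lp ℝ 2 (volume : Measure ℝ), ∃ C, ∀ n, ‖g n f‖ ≤ C := by
      intro f
      have hval : ∀ n, g n f = ∫ s, uN n s * f s := by
        intro n
        have : (g n f : ℝ) = ∫ s, ((huN n).toLp (uN n)) s * f s := by
          rw [hgdef]
          simp only [innerSL_apply_apply]
          rw [MeasureTheory.L2.inner_def]
          exact integral_congr_ae (Filter.Eventually.of_forall fun s => by
            simp [RCLike.inner_apply, mul_comm])
        rw [this]
        refine integral_congr_ae ?_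
        filter_upwards [(huN n).coeFn_toLp] with s hs
        rw [hs]

      have htd : Tendsto (fun n => g n f) atTop (𝓝 (∫ s, u s * f s)) := by
        simp_rw [hval]
        exact hweak _ (Lp.memLp f)
      have : BddAbove (Set.range fun n => ‖g n f‖) :=
        (htd.norm).bddAbove_range
      obtain ⟨C, hC⟩ := this
      exact ⟨C, fun n => hC ⟨n, rfl⟩⟩
    obtain ⟨C, hC⟩ := banach_steinhaus hbdd
    refine ⟨C, fun n => ?_⟩
    have := hC n
    rwa [hgdef, innerSL_apply_norm] at this
  have hCnn : 0 ≤ C := (norm_nonneg _).trans (hC 0)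
  set D : ℝ := C + (eLpNorm u 2 volume).toReal with hD
  have hDnn : 0 ≤ D := by positivity
  -- key norm bound for the differences
  have hdiff : ∀ n, (eLpNorm (fun s => uN n s - u s) 2 volume).toReal ≤ D := by
    intro n
    have hmem : MemLp (fun s => uN n s - u s) 2 (volume : Measure ℝ) := (huN n).sub hu
    have h1 : (eLpNorm (fun s => uN n s - u s) 2 volume).toReal
        = ‖hmem.toLp (fun s => uN n s - u s)‖ :=
      (Lp.norm_toLp (fun s => uN n s - u s) hmem).symm
    rw [h1]
    have h2 : hmem.toLp (fun s => uN n s - u s) = (huN n).toLp (uN n) - hu.toLp u := by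
      have := MemLp.toLp_sub (huN n) hu
      convert this using 2
      rfl
    rw [h2]
    refine (norm_sub_le _ _).trans ?_
    have : ‖hu.toLp u‖ = (eLpNorm u 2 volume).toReal := Lp.norm_toLp u hu
    rw [hD, this]
    exact add_le_add_left (hC n) _
  -- dominated convergence
  have main := tendsto_integral_of_dominated_convergence (μ := μ)
    (F := fun n x => ((∫ s in (0:ℝ)..(y x), uN n s) - ∫ s in (0:ℝ)..(y x), u s) ^ 2)
    (f := fun _ => (0:ℝ)) (fun x => D ^ 2 * |y x|)
  simp only [MeasureTheory.integral_zero] at main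
  refine main ?_ ?_ ?_ ?_
  · -- measurability
    intro n
    have hcont : Continuous (fun t : ℝ =>
        ((∫ s in (0:ℝ)..t, uN n s) - ∫ s in (0:ℝ)..t, u s) ^ 2) := by
      have h1 : Continuous (fun t : ℝ => ∫ s in (0:ℝ)..t, uN n s) :=
        intervalIntegral.continuous_primitive (fun a b => aux_intervalIntegrable (huN n) a b) 0
      have h2 : Continuous (fun t : ℝ => ∫ s in (0:ℝ)..t, u s) :=
        intervalIntegral.continuous_primitive (fun a b => aux_intervalIntegrable hu a b) 0
      exact (h1.sub h2).pow 2
    exact hcont.comp_aestronglyMeasurable hy.aestronglyMeasurable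
  · exact (hy.abs).const_mul _
  · -- domination
    intro n
    refine Filter.Eventually.of_forall fun x => ?_
    set t := y x
    have hsub : (∫ s in (0:ℝ)..t, uN n s) - ∫ s in (0:ℝ)..t, u s
        = ∫ s in (0:ℝ)..t, (uN n s - u s) := by
      rw [intervalIntegral.integral_sub (aux_intervalIntegrable (huN n) 0 t)
        (aux_intervalIntegrable hu 0 t)]
    have hb := aux_primitive_le ((huN n).sub hu) t
    have hDb : |∫ s in (0:ℝ)..t, (uN n s - u s)| ≤ D * Real.sqrt |t| :=
      hb.trans (mul_le_mul_of_nonneg_right (hdiff n) (Real.sqrt_nonneg _))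
    have : ‖((∫ s in (0:ℝ)..t, uN n s) - ∫ s in (0:ℝ)..t, u s) ^ 2‖
        = |∫ s in (0:ℝ)..t, (uN n s - u s)| ^ 2 := by
      rw [hsub, Real.norm_eq_abs, abs_pow]
    rw [this]
    calc |∫ s in (0:ℝ)..t, (uN n s - u s)| ^ 2
        ≤ (D * Real.sqrt |t|) ^ 2 := by
          exact pow_le_pow_left₀ (abs_nonneg _) hDb 2
      _ = D ^ 2 * |t| := by
          rw [mul_pow, Real.sq_sqrt (abs_nonneg _)]
  · -- pointwise convergence
    refine Filter.Eventually.of_forall fun x => ?_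
    have h := (aux_ptwise hweak (y x)).sub (tendsto_const_nhds
      (x := ∫ s in (0:ℝ)..(y x), u s))
    have h2 := h.pow 2
    simpa using h2
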